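/- Let v : E × ℝ × ℝ → E be twice continuously differentiable with div_x v(x,t,s) = 0 for all (x,t,s), let Φ : E × ℝ × ℝ → E be twice continuously differentiable with ∂_s Φ(a,t,s) = v(Φ(a,t,s),t,s) and Φ(a,t,0) = a, and let u : E × ℝ × ℝ → E be twice continuously differentiable satisfying the compatibility identity ∂_s u + D_x u[v] = D_x v[u] + ∂_t v at every (x,t,s), with u(x,t,0) = 0 for all x, t. Then: (i) for every (a,t), the function s ↦ (div_x u)(Φ(a,t,s),t,s) has derivative zero, i.e., the divergence of u is preserved along the flow; and (ii) consequently (div_x u)(Φ(a,t,s),t,s) = 0 for all (a,t,s), so u is divergence-free at every point in the range of the flow. -/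

import Mathlib

section Aux
variable {d : ℕ}

local notation "E" => EuclideanSpace ℝ (Fin d)
local notation "F" => (EuclideanSpace ℝ (Fin d) × ℝ × ℝ)

/-- The standard basis of `EuclideanSpace ℝ (Fin d)`. -/
noncomputable def bE (d : ℕ) : Module.Basis (Fin d) ℝ (EuclideanSpace ℝ (Fin d)) :=
  PiLp.basisFun 2 ℝ (Fin d)

/-- The inclusion `x ↦ (x,0,0)`. -/
noncomputable def Jmap (d : ℕ) :
    EuclideanSpace ℝ (Fin d) →L[ℝ] EuclideanSpace ℝ (Fin d) × ℝ × ℝ :=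
  ContinuousLinearMap.inl ℝ (EuclideanSpace ℝ (Fin d)) (ℝ × ℝ)

lemma trace_eq_sum (M : (EuclideanSpace ℝ (Fin d)) →ₗ[ℝ] (EuclideanSpace ℝ (Fin d))) :
    LinearMap.trace ℝ _ M = ∑ i, M (bE d i) i := by
  rw [LinearMap.trace_eq_matrix_trace ℝ (bE d) M, Matrix.trace]
  congr 1
  ext i
  simp [LinearMap.toMatrix_apply, bE, Matrix.diag]

lemma hasFDerivAt_slice {f : F → E} (hf : Differentiable ℝ f) (x : E) (t s : ℝ) :
    HasFDerivAt (fun y => f (y, t, s)) ((fderiv ℝ f (x, t, s)).comp (Jmap d)) x := by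
  have h1 : HasFDerivAt (fun y : EuclideanSpace ℝ (Fin d) => ((y, t, s) : F)) (Jmap d) x := by
    have := (hasFDerivAt_id x).prodMk (hasFDerivAt_const (𝕜 := ℝ) ((t, s) : ℝ × ℝ) x)
    exact this
  exact ((hf (x, t, s)).hasFDerivAt).comp x h1

lemma hasDerivAt_scurve {f : F → E} (hf : Differentiable ℝ f) (x : E) (t s : ℝ) :
    HasDerivAt (fun s' => f (x, t, s')) (fderiv ℝ f (x, t, s) (0, 0, 1)) s := by
  have h1 : HasDerivAt (fun s' : ℝ => ((x, t, s') : F)) ((0 : E), (0 : ℝ), (1 : ℝ)) s :=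
    (hasDerivAt_const s x).prodMk ((hasDerivAt_const s t).prodMk (hasDerivAt_id s))
  exact ((hf (x, t, s)).hasFDerivAt).comp_hasDerivAt s h1

lemma hasDerivAt_tcurve {f : F → E} (hf : Differentiable ℝ f) (x : E) (t s : ℝ) :
    HasDerivAt (fun t' => f (x, t', s)) (fderiv ℝ f (x, t, s) (0, 1, 0)) t := by
  have h1 : HasDerivAt (fun t' : ℝ => ((x, t', s) : F)) ((0 : E), (1 : ℝ), (0 : ℝ)) t :=
    (hasDerivAt_const t x).prodMk ((hasDerivAt_id t).prodMk (hasDerivAt_const t s))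
  exact ((hf (x, t, s)).hasFDerivAt).comp_hasDerivAt t h1

/-- The continuous linear functional `T ↦ (T (e i, 0, 0)) i` on operators `F →L E`. -/
noncomputable def Amap (d : ℕ) (i : Fin d) :
    ((EuclideanSpace ℝ (Fin d) × ℝ × ℝ) →L[ℝ] EuclideanSpace ℝ (Fin d)) →L[ℝ] ℝ :=
  (EuclideanSpace.proj i).comp
    (ContinuousLinearMap.apply ℝ (EuclideanSpace ℝ (Fin d)) (Jmap d (bE d i)))

lemma Amap_apply (i : Fin d) (T : F →L[ℝ] E) :
    Amap d i T = (T (Jmap d (bE d i))) i := rfl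

lemma hasFDerivAt_divsum {f : F → E} (hf : ContDiff ℝ 2 f) (p : F) :
    HasFDerivAt (fun q : F => ∑ i, (fderiv ℝ f q (Jmap d (bE d i))) i)
      (∑ i, (Amap d i).comp (fderiv ℝ (fderiv ℝ f) p)) p := by
  have hfd : Differentiable ℝ (fderiv ℝ f) :=
    (hf.fderiv_right (m := 1) (by norm_num)).differentiable one_ne_zero
  have h := HasFDerivAt.fun_sum (u := Finset.univ)
    (fun i (_ : i ∈ Finset.univ) =>
      ((Amap d i).hasFDerivAt.comp p ((hfd p).hasFDerivAt)))
  exact h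

end Aux

/-- The divergence in the state variable of `f : E × ℝ × ℝ → E` at `(x,t,s)`:
the trace of the Fréchet derivative `Dₓ f(x,t,s)`. -/
noncomputable def stateDiv {d : ℕ}
    (f : EuclideanSpace ℝ (Fin d) × ℝ × ℝ → EuclideanSpace ℝ (Fin d))
    (x : EuclideanSpace ℝ (Fin d)) (t s : ℝ) : ℝ :=
  LinearMap.trace ℝ (EuclideanSpace ℝ (Fin d))
    (fderiv ℝ (fun y => f (y, t, s)) x).toLinearMap

/-- **Divergence-free sampling-time velocity yields divergence-free physics-time velocity.**
If `v` is `C²` and divergence-free, `Φ` is a `C²` flow of `v` with `Φ(a,t,0) = a`, and `u` is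
`C²`, vanishes at `s = 0`, and satisfies the compatibility identity, then (i) the divergence
of `u` is preserved along the flow (`s ↦ (div u)(Φ(a,t,s),t,s)` has derivative zero) and
(ii) `(div u)(Φ(a,t,s),t,s) = 0` for all `(a,t,s)`. -/
theorem div_free_preserved (d : ℕ)
    (Φ u v : EuclideanSpace ℝ (Fin d) × ℝ × ℝ → EuclideanSpace ℝ (Fin d))
    (hv : ContDiff ℝ 2 v)
    (hv_div : ∀ (x : EuclideanSpace ℝ (Fin d)) (t s : ℝ), stateDiv v x t s = 0)
    (hΦ : ContDiff ℝ 2 Φ)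
    (hflow_s : ∀ (a : EuclideanSpace ℝ (Fin d)) (t s : ℝ),
      deriv (fun s' => Φ (a, t, s')) s = v (Φ (a, t, s), t, s))
    (hinit : ∀ (a : EuclideanSpace ℝ (Fin d)) (t : ℝ), Φ (a, t, 0) = a)
    (hu : ContDiff ℝ 2 u)
    (hu0 : ∀ (x : EuclideanSpace ℝ (Fin d)) (t : ℝ), u (x, t, 0) = 0)
    (hcompat : ∀ (x : EuclideanSpace ℝ (Fin d)) (t s : ℝ),
      deriv (fun s' => u (x, t, s')) s
          + fderiv ℝ (fun y => u (y, t, s)) x (v (x, t, s)) =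
        fderiv ℝ (fun y => v (y, t, s)) x (u (x, t, s))
          + deriv (fun t' => v (x, t', s)) t) :
    (∀ (a : EuclideanSpace ℝ (Fin d)) (t s : ℝ),
      deriv (fun s' => stateDiv u (Φ (a, t, s')) t s') s = 0)
    ∧ ∀ (a : EuclideanSpace ℝ (Fin d)) (t s : ℝ),
      stateDiv u (Φ (a, t, s)) t s = 0 := by
  classical
  have hud : Differentiable ℝ u := hu.differentiable (by norm_num)
  have hvd : Differentiable ℝ v := hv.differentiable (by norm_num)
  have hUd : Differentiable ℝ (fderiv ℝ u) :=
    (hu.fderiv_right (m := 1) (by norm_num)).differentiable one_ne_zero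
  have hVd : Differentiable ℝ (fderiv ℝ v) :=
    (hv.fderiv_right (m := 1) (by norm_num)).differentiable one_ne_zero
  -- divergence as a sum of coordinates
  have hDiv : ∀ (f : EuclideanSpace ℝ (Fin d) × ℝ × ℝ → EuclideanSpace ℝ (Fin d)),
      Differentiable ℝ f → ∀ (x : EuclideanSpace ℝ (Fin d)) (t s : ℝ),
      stateDiv f x t s = ∑ i, (fderiv ℝ f (x, t, s) (Jmap d (bE d i))) i := by
    intro f hf x t s
    rw [stateDiv, (hasFDerivAt_slice hf x t s).fderiv, trace_eq_sum]
    rfl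
  -- compact form of the compatibility identity
  have compat : ∀ p : EuclideanSpace ℝ (Fin d) × ℝ × ℝ,
      fderiv ℝ u p (v p, 0, 1) = fderiv ℝ v p (u p, 1, 0) := by
    rintro ⟨x, t, s⟩
    have h := hcompat x t s
    rw [(hasDerivAt_scurve hud x t s).deriv, (hasDerivAt_tcurve hvd x t s).deriv,
        (hasFDerivAt_slice hud x t s).fderiv, (hasFDerivAt_slice hvd x t s).fderiv] at h
    have eu : fderiv ℝ u (x, t, s) ((v (x, t, s), 0, 1) : EuclideanSpace ℝ (Fin d) × ℝ × ℝ)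
        = fderiv ℝ u (x, t, s) ((0 : EuclideanSpace ℝ (Fin d)), (0 : ℝ), (1 : ℝ))
          + ((fderiv ℝ u (x, t, s)).comp (Jmap d)) (v (x, t, s)) := by
      rw [ContinuousLinearMap.comp_apply, ← map_add]
      congr 1
      simp [Jmap, Prod.ext_iff]
    have ev : fderiv ℝ v (x, t, s) ((u (x, t, s), 1, 0) : EuclideanSpace ℝ (Fin d) × ℝ × ℝ)
        = ((fderiv ℝ v (x, t, s)).comp (Jmap d)) (u (x, t, s))
          + fderiv ℝ v (x, t, s) ((0 : EuclideanSpace ℝ (Fin d)), (1 : ℝ), (0 : ℝ)) := by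
      rw [ContinuousLinearMap.comp_apply, ← map_add]
      congr 1
      simp [Jmap, Prod.ext_iff]
    rw [eu, ev]
    exact h
  -- key pointwise identity
  have key : ∀ p : EuclideanSpace ℝ (Fin d) × ℝ × ℝ,
      (∑ i, (Amap d i).comp (fderiv ℝ (fderiv ℝ u) p)) ((v p, 0, 1) :
        EuclideanSpace ℝ (Fin d) × ℝ × ℝ) = 0 := by
    intro p
    -- derivative of both sides of `compat`
    have hw : HasFDerivAt (fun q : EuclideanSpace ℝ (Fin d) × ℝ × ℝ =>
        ((v q, 0, 1) : EuclideanSpace ℝ (Fin d) × ℝ × ℝ))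
        ((fderiv ℝ v p).prod 0) p :=
      ((hvd p).hasFDerivAt).prodMk (hasFDerivAt_const _ _)
    have hz : HasFDerivAt (fun q : EuclideanSpace ℝ (Fin d) × ℝ × ℝ =>
        ((u q, 1, 0) : EuclideanSpace ℝ (Fin d) × ℝ × ℝ))
        ((fderiv ℝ u p).prod 0) p :=
      ((hud p).hasFDerivAt).prodMk (hasFDerivAt_const _ _)
    have hl : HasFDerivAt (fun q => fderiv ℝ u q ((v q, 0, 1) :
        EuclideanSpace ℝ (Fin d) × ℝ × ℝ))
        ((fderiv ℝ u p).comp ((fderiv ℝ v p).prod 0)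
          + (fderiv ℝ (fderiv ℝ u) p).flip ((v p, 0, 1) :
            EuclideanSpace ℝ (Fin d) × ℝ × ℝ)) p :=
      ((hUd p).hasFDerivAt).clm_apply hw
    have hr : HasFDerivAt (fun q => fderiv ℝ v q ((u q, 1, 0) :
        EuclideanSpace ℝ (Fin d) × ℝ × ℝ))
        ((fderiv ℝ v p).comp ((fderiv ℝ u p).prod 0)
          + (fderiv ℝ (fderiv ℝ v) p).flip ((u p, 1, 0) :
            EuclideanSpace ℝ (Fin d) × ℝ × ℝ)) p :=
      ((hVd p).hasFDerivAt).clm_apply hz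
    have hfun : (fun q => fderiv ℝ u q ((v q, 0, 1) :
          EuclideanSpace ℝ (Fin d) × ℝ × ℝ))
        = (fun q => fderiv ℝ v q ((u q, 1, 0) :
          EuclideanSpace ℝ (Fin d) × ℝ × ℝ)) := funext compat
    have heq := hl.unique (hfun ▸ hr)
    -- symmetry of second derivatives
    have hsymm_u : ∀ q r : EuclideanSpace ℝ (Fin d) × ℝ × ℝ,
        fderiv ℝ (fderiv ℝ u) p q r = fderiv ℝ (fderiv ℝ u) p r q :=
      second_derivative_symmetric (fun y => (hud y).hasFDerivAt) ((hUd p).hasFDerivAt)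
    have hsymm_v : ∀ q r : EuclideanSpace ℝ (Fin d) × ℝ × ℝ,
        fderiv ℝ (fderiv ℝ v) p q r = fderiv ℝ (fderiv ℝ v) p r q :=
      second_derivative_symmetric (fun y => (hvd y).hasFDerivAt) ((hVd p).hasFDerivAt)
    -- the divergence of v, as a sum, is the zero function
    have hDv0 : (fun q : EuclideanSpace ℝ (Fin d) × ℝ × ℝ =>
        ∑ i, (fderiv ℝ v q (Jmap d (bE d i))) i) = fun _ => (0 : ℝ) := by
      funext q
      have h0 := hv_div q.1 q.2.1 q.2.2
      rw [hDiv v hvd] at h0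
      exact h0
    have hz0 : (∑ i, (Amap d i).comp (fderiv ℝ (fderiv ℝ v) p)) = 0 := by
      have h0 : HasFDerivAt (fun _ : EuclideanSpace ℝ (Fin d) × ℝ × ℝ => (0 : ℝ))
          (∑ i, (Amap d i).comp (fderiv ℝ (fderiv ℝ v) p)) p := hDv0 ▸ hasFDerivAt_divsum hv p
      exact h0.unique (hasFDerivAt_const 0 p)
    -- trace commutation
    have htr :
        ∑ i, (fderiv ℝ v p (Jmap d (fderiv ℝ u p (Jmap d (bE d i))))) i
          = ∑ i, (fderiv ℝ u p (Jmap d (fderiv ℝ v p (Jmap d (bE d i))))) i := by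
      have h1 := trace_eq_sum ((((fderiv ℝ v p).comp (Jmap d)).comp
        ((fderiv ℝ u p).comp (Jmap d))).toLinearMap)
      have h2 := trace_eq_sum ((((fderiv ℝ u p).comp (Jmap d)).comp
        ((fderiv ℝ v p).comp (Jmap d))).toLinearMap)
      have h3 : LinearMap.trace ℝ _ ((((fderiv ℝ v p).comp (Jmap d)).comp
            ((fderiv ℝ u p).comp (Jmap d))).toLinearMap)
          = LinearMap.trace ℝ _ ((((fderiv ℝ u p).comp (Jmap d)).comp
            ((fderiv ℝ v p).comp (Jmap d))).toLinearMap) := by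
        rw [ContinuousLinearMap.toLinearMap_comp, ContinuousLinearMap.toLinearMap_comp]
        exact LinearMap.trace_mul_comm ℝ _ _
      rw [h1, h2] at h3
      exact h3
    -- put everything together
    have happ : ∀ i : Fin d,
        fderiv ℝ (fderiv ℝ u) p (Jmap d (bE d i)) ((v p, 0, 1) :
            EuclideanSpace ℝ (Fin d) × ℝ × ℝ)
          + fderiv ℝ u p (Jmap d (fderiv ℝ v p (Jmap d (bE d i))))
        = fderiv ℝ (fderiv ℝ v) p (Jmap d (bE d i)) ((u p, 1, 0) :
            EuclideanSpace ℝ (Fin d) × ℝ × ℝ)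
          + fderiv ℝ v p (Jmap d (fderiv ℝ u p (Jmap d (bE d i)))) := by
      intro i
      have := congrArg (fun T => T (Jmap d (bE d i))) heq
      simpa [ContinuousLinearMap.add_apply, ContinuousLinearMap.comp_apply,
        ContinuousLinearMap.flip_apply, ContinuousLinearMap.prod_apply, Jmap,
        add_comm] using this
    calc (∑ i, (Amap d i).comp (fderiv ℝ (fderiv ℝ u) p)) ((v p, 0, 1) :
          EuclideanSpace ℝ (Fin d) × ℝ × ℝ)
        = ∑ i, (fderiv ℝ (fderiv ℝ u) p ((v p, 0, 1) :
            EuclideanSpace ℝ (Fin d) × ℝ × ℝ) (Jmap d (bE d i))) i := by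
          rw [ContinuousLinearMap.sum_apply]
          rfl
      _ = ∑ i, (fderiv ℝ (fderiv ℝ u) p (Jmap d (bE d i)) ((v p, 0, 1) :
            EuclideanSpace ℝ (Fin d) × ℝ × ℝ)) i := by
          congr 1; funext i; rw [hsymm_u]
      _ = ∑ i, ((fderiv ℝ (fderiv ℝ v) p (Jmap d (bE d i)) ((u p, 1, 0) :
              EuclideanSpace ℝ (Fin d) × ℝ × ℝ)) i
            + (fderiv ℝ v p (Jmap d (fderiv ℝ u p (Jmap d (bE d i))))) i
            - (fderiv ℝ u p (Jmap d (fderiv ℝ v p (Jmap d (bE d i))))) i) := by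
          congr 1; funext i
          have := happ i
          have h4 := congrArg (fun y : EuclideanSpace ℝ (Fin d) => y i) this
          simp only [PiLp.add_apply] at h4
          linarith
      _ = 0 := by
          rw [Finset.sum_sub_distrib, Finset.sum_add_distrib]
          have hA : ∑ i, (fderiv ℝ (fderiv ℝ v) p (Jmap d (bE d i)) ((u p, 1, 0) :
              EuclideanSpace ℝ (Fin d) × ℝ × ℝ)) i = 0 := by
            have h5 := congrArg (fun T : (EuclideanSpace ℝ (Fin d) × ℝ × ℝ) →L[ℝ] ℝ =>
              T ((u p, 1, 0) : EuclideanSpace ℝ (Fin d) × ℝ × ℝ)) hz0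
            simp only [ContinuousLinearMap.sum_apply, ContinuousLinearMap.comp_apply,
              Amap_apply, ContinuousLinearMap.zero_apply] at h5
            calc ∑ i, (fderiv ℝ (fderiv ℝ v) p (Jmap d (bE d i)) ((u p, 1, 0) :
                  EuclideanSpace ℝ (Fin d) × ℝ × ℝ)) i
                = ∑ i, (fderiv ℝ (fderiv ℝ v) p ((u p, 1, 0) :
                  EuclideanSpace ℝ (Fin d) × ℝ × ℝ) (Jmap d (bE d i))) i :=
                  Finset.sum_congr rfl (fun i _ =>
                    congrArg (fun y : EuclideanSpace ℝ (Fin d) => y i) (hsymm_v _ _))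
              _ = 0 := h5
          rw [hA, htr]
          ring
  have hflow : ∀ (a : EuclideanSpace ℝ (Fin d)) (t s : ℝ),
      HasDerivAt (fun s' => stateDiv u (Φ (a, t, s')) t s') 0 s := by
    intro a t s
    have hΦd : Differentiable ℝ Φ := hΦ.differentiable (by norm_num)
    have h1 : HasDerivAt (fun s' : ℝ => ((a, t, s') : EuclideanSpace ℝ (Fin d) × ℝ × ℝ))
        ((0 : EuclideanSpace ℝ (Fin d)), (0 : ℝ), (1 : ℝ)) s :=
      (hasDerivAt_const s a).prodMk ((hasDerivAt_const s t).prodMk (hasDerivAt_id s))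
    have hcurve : HasDerivAt (fun s' => Φ (a, t, s')) (v (Φ (a, t, s), t, s)) s := by
      have hd : DifferentiableAt ℝ (fun s' => Φ (a, t, s')) s :=
        ((hΦd _).hasFDerivAt.comp_hasDerivAt s h1).differentiableAt
      rw [← hflow_s a t s]
      exact hd.hasDerivAt
    have hγ : HasDerivAt (fun s' => ((Φ (a, t, s'), t, s') :
        EuclideanSpace ℝ (Fin d) × ℝ × ℝ))
        ((v (Φ (a, t, s), t, s), (0 : ℝ), (1 : ℝ))) s :=
      hcurve.prodMk ((hasDerivAt_const s t).prodMk (hasDerivAt_id s))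
    have hres := (hasFDerivAt_divsum hu (Φ (a, t, s), t, s)).comp_hasDerivAt s hγ
    rw [key] at hres
    have hfun : (fun s' => stateDiv u (Φ (a, t, s')) t s')
        = fun s' => ∑ i, (fderiv ℝ u ((Φ (a, t, s'), t, s') :
            EuclideanSpace ℝ (Fin d) × ℝ × ℝ) (Jmap d (bE d i))) i :=
      funext fun s' => hDiv u hud _ _ _
    rw [hfun]
    exact hres
  refine ⟨fun a t s => (hflow a t s).deriv, fun a t s => ?_⟩
  have hconst := is_const_of_deriv_eq_zero (f := fun s' => stateDiv u (Φ (a, t, s')) t s')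
    (fun s' => (hflow a t s').differentiableAt) (fun s' => (hflow a t s').deriv) s 0
  have h0 : stateDiv u a t 0 = 0 := by
    have he : (fun y => u (y, t, 0)) = fun _ : EuclideanSpace ℝ (Fin d) =>
        (0 : EuclideanSpace ℝ (Fin d)) := funext fun y => hu0 y t
    rw [stateDiv, he]
    simp
  simpa [hinit a t, h0] using hconst
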